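/- Let R be a finite unital ring and let A and E be finite R-modules. Then there exists a positive integer ℓ such that for every positive integer n, every submodule C of A^n, and every R-linear map h : C → E, there exist an R-linear map p : A^n → A^ℓ and an R-linear map k : p(C) → E (where p(C) is the image submodule of C under p) satisfying k(p(x)) = h(x) for all x ∈ C. -/

import Mathlib

open Finset in
/-- Characters of a finite abelian group into `ℚ/ℤ` form a finite set. -/
lemma finite_addMonoidHom_addCircle (M : Type*) [AddCommGroup M] [Finite M] :
    Finite (M →+ AddCircle (1 : ℚ)) := by
  haveI : Fact ((0:ℚ) < 1) := ⟨one_pos⟩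
  set N := Nat.card M with hN
  have hNpos : 0 < N := Nat.card_pos
  have hT : {x : AddCircle (1:ℚ) | N • x = 0}.Finite := by
    have hsub : {x : AddCircle (1:ℚ) | N • x = 0} ⊆
        ⋃ d : Fin N, {u : AddCircle (1:ℚ) | addOrderOf u = (d : ℕ) + 1} := by
      intro x hx
      have h1 : addOrderOf x ∣ N := addOrderOf_dvd_of_nsmul_eq_zero hx
      have h0 : addOrderOf x ≠ 0 := by
        intro hc
        rw [hc] at h1
        exact hNpos.ne' (Nat.eq_zero_of_zero_dvd h1)
      have h2 : addOrderOf x - 1 < N :=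
        lt_of_lt_of_le (Nat.pred_lt h0) (Nat.le_of_dvd hNpos h1)
      refine Set.mem_iUnion.2 ⟨⟨addOrderOf x - 1, h2⟩, ?_⟩
      show addOrderOf x = addOrderOf x - 1 + 1
      omega
    refine Set.Finite.subset (Set.finite_iUnion fun d => ?_) hsub
    exact AddCircle.finite_setOfPred_addOrderOf_eq (p := (1:ℚ)) (Nat.succ_pos _)
  haveI : Finite {x : AddCircle (1:ℚ) | N • x = 0} := hT.to_subtype
  refine Finite.of_injective
    (fun χ : M →+ AddCircle (1:ℚ) =>
      (fun m => (⟨χ m, by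
        show N • χ m = 0
        rw [← map_nsmul, hN, card_nsmul_eq_zero', map_zero]⟩ :
        {x : AddCircle (1:ℚ) | N • x = 0}))) ?_
  intro χ₁ χ₂ hχ
  ext m
  exact congrArg Subtype.val (congrFun hχ m)

/-- For a finite ring `R` and finite `R`-modules `A`, `E`, there
is a positive integer `ℓ` such that every `R`-linear map `h : C → E` defined on
a submodule `C ≤ Aⁿ` factors as `h = k ∘ p` with `p : Aⁿ →ₗ A^ℓ` and
`k : p(C) →ₗ E`. -/
theorem stmt_2
    (R : Type*) [Ring R] [Fintype R]
    (A : Type*) [AddCommGroup A] [Module R A] [Fintype A]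
    (E : Type*) [AddCommGroup E] [Module R E] [Fintype E] :
    ∃ ℓ : ℕ, 0 < ℓ ∧
      ∀ (n : ℕ), 0 < n →
        ∀ (C : Submodule R (Fin n → A)) (h : C →ₗ[R] E),
          ∃ (p : (Fin n → A) →ₗ[R] (Fin ℓ → A))
            (g : (C.map p) →ₗ[R] E),
            ∀ x : C, g ⟨p x, Submodule.mem_map_of_mem x.2⟩ = h x := by
  classical
  set Q := AddCircle (1:ℚ)
  -- the set of characters of E, and of A
  haveI hXfin : Finite (E →+ Q) := finite_addMonoidHom_addCircle E
  haveI hAfin : Finite (A →+ Q) := finite_addMonoidHom_addCircle A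
  set Ψ := (E →+ Q) → (A →+ Q) with hΨ
  haveI : Finite Ψ := by infer_instance
  obtain ⟨ℓ, ⟨eΨ⟩⟩ := Finite.exists_equiv_fin Ψ
  refine ⟨ℓ, ?_, ?_⟩
  · have : Nonempty Ψ := ⟨fun _ => 0⟩
    have : Nonempty (Fin ℓ) := ⟨eΨ this.some⟩
    exact Fin.pos_iff_nonempty.mpr this
  intro n hn C h
  -- extend each χ ∘ h : C →+ Q to all of A^n
  have hext : ∀ χ : E →+ Q, ∃ G : (Fin n → A) →+ Q,
      ∀ c : C, G c = χ (h c) := by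
    intro χ
    obtain ⟨G, hG⟩ := (Module.Baer.of_divisible Q).extension_property_addMonoidHom
      (C.subtype.toAddMonoidHom) (fun a b hab => Subtype.ext hab)
      (χ.comp h.toAddMonoidHom)
    exact ⟨G, fun c => DFunLike.congr_fun hG c⟩
  choose G hG using hext
  -- classify coordinates
  set ψ : Fin n → Ψ := fun j χ =>
    { toFun := fun a => G χ (Pi.single j a)
      map_zero' := by simp
      map_add' := fun a b => by
        show G χ (Pi.single j (a + b)) = G χ (Pi.single j a) + G χ (Pi.single j b)
        rw [Pi.single_add, map_add] } with hψ
  -- the map p : group coordinates according to their class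
  set p : (Fin n → A) →ₗ[R] (Fin ℓ → A) :=
    { toFun := fun x i => ∑ j ∈ Finset.univ.filter (fun j => eΨ (ψ j) = i), x j
      map_add' := fun x y => by
        funext i
        simp [Finset.sum_add_distrib]
      map_smul' := fun r x => by
        funext i
        simp [Finset.smul_sum] } with hp
  -- key: kernel of p on C is inside kernel of h
  have key : ∀ x : C, p (x : Fin n → A) = 0 → h x = 0 := by
    intro x hx
    by_contra hne
    obtain ⟨χ, hχ⟩ := CharacterModule.exists_character_apply_ne_zero_of_ne_zero hne
    apply hχ
    have hx' : ∀ i : Fin ℓ, ∑ j ∈ Finset.univ.filter (fun j => eΨ (ψ j) = i),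
        (x : Fin n → A) j = 0 := fun i => congrFun hx i
    have hsum : (χ : E →+ Q) (h x) = G (χ : E →+ Q) (x : Fin n → A) :=
      (hG (χ : E →+ Q) x).symm
    rw [show (χ (h x) : Q) = (χ : E →+ Q) (h x) from rfl, hsum]
    have hdecomp : (x : Fin n → A) = ∑ j : Fin n, Pi.single j ((x : Fin n → A) j) :=
      (Finset.univ_sum_single _).symm
    rw [hdecomp, map_sum]
    have : ∀ j : Fin n, G (χ : E →+ Q) (Pi.single j ((x : Fin n → A) j)) =
        (ψ j (χ : E →+ Q)) ((x : Fin n → A) j) := fun j => rfl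
    simp_rw [this]
    rw [← Finset.sum_fiberwise_of_maps_to (g := fun j => eΨ (ψ j))
      (t := Finset.univ) (fun j _ => Finset.mem_univ _)]
    refine Finset.sum_eq_zero fun i _ => ?_
    have : ∀ j ∈ Finset.univ.filter (fun j => eΨ (ψ j) = i),
        (ψ j (χ : E →+ Q)) ((x : Fin n → A) j)
          = (eΨ.symm i (χ : E →+ Q)) ((x : Fin n → A) j) := by
      intro j hj
      have : ψ j = eΨ.symm i := by
        have := (Finset.mem_filter.mp hj).2
        rw [← this, Equiv.symm_apply_apply]
      rw [this]
    rw [Finset.sum_congr rfl this, ← map_sum, hx' i, map_zero]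
  -- now build g by factoring h through p(C)
  set f : C →ₗ[R] (Fin ℓ → A) := p.comp C.subtype with hf
  have hker : LinearMap.ker f ≤ LinearMap.ker h := by
    intro c hc
    exact LinearMap.mem_ker.mpr (key c (LinearMap.mem_ker.mp hc))
  have heq : C.map p = LinearMap.range f := by
    rw [hf, LinearMap.range_comp, Submodule.range_subtype]
  set e := f.quotKerEquivRange with he
  refine ⟨p, ((LinearMap.ker f).liftQ h hker).comp
    (e.symm.toLinearMap.comp (LinearEquiv.ofEq _ _ heq).toLinearMap), fun x => ?_⟩
  have h1 : (LinearEquiv.ofEq _ _ heq) ⟨p x, Submodule.mem_map_of_mem x.2⟩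
      = e (Submodule.Quotient.mk x) := by
    apply Subtype.ext
    simp [he, LinearMap.quotKerEquivRange_apply_mk, hf]
  simp only [LinearMap.comp_apply, LinearEquiv.coe_coe, h1,
    LinearEquiv.symm_apply_apply, Submodule.liftQ_apply]
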